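/- Let n, k be positive integers and r a nonnegative integer with n > 2k and k − 1 = (n−2k)r. Then for every vertex A of the Kneser graph K_{n,k}, the (2r+1)-fold neighborhood N_{2r+1}(A) equals V(K_{n,k}) \ {A}. -/

import Mathlib

open SimpleGraph

/-- The `r`-fold neighborhood: `nbhd G 0 v = {v}`, `nbhd G (r+1) v = ⋃_{w ∈ nbhd G r v} N(w)`. -/
def nbhd {V : Type*} (G : SimpleGraph V) : ℕ → V → Set V
  | 0, v => {v}
  | r+1, v => {y | ∃ w ∈ nbhd G r v, G.Adj w y}

/-- The Kneser graph on `k`-subsets of `[n]`. -/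
def kneser (n k : ℕ) : SimpleGraph {A : Finset (Fin n) // A.card = k} where
  Adj A B := A ≠ B ∧ Disjoint A.1 B.1
  symm := by constructor; rintro A B ⟨h1, h2⟩; exact ⟨h1.symm, h2.symm⟩
  loopless := by constructor; rintro A ⟨h, _⟩; exact h rfl

/-- The odd girth of a graph, as an extended natural number. -/
noncomputable def oddGirth {V : Type*} (G : SimpleGraph V) : ℕ∞ :=
  sInf ((↑) '' {l : ℕ | Odd l ∧ ∃ v : V, ∃ w : G.Walk v v, w.length = l})

/-- The cycle graph on `ZMod m`. -/
def cyc (m : ℕ) : SimpleGraph (ZMod m) where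
  Adj x y := x ≠ y ∧ (y = x + 1 ∨ x = y + 1)
  symm := by constructor; rintro x y ⟨h1, h2⟩; exact ⟨h1.symm, h2.symm⟩
  loopless := ⟨fun x h => h.1 rfl⟩

/-- The `r`-neighborhood complex of `G`, as a set of finite subsets of vertices. -/
def nComplex {V : Type*} (G : SimpleGraph V) (r : ℕ) : Set (Finset V) :=
  {σ | ∃ v : V, ↑σ ⊆ nbhd G r v}

lemma mem_nbhd_of_chain {V : Type*} (G : SimpleGraph V) (m : ℕ) (f : ℕ → V)
    (hadj : ∀ i < m, G.Adj (f i) (f (i+1))) : f m ∈ nbhd G m (f 0) := by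
  induction m with
  | zero => exact rfl
  | succ m ih => exact ⟨f m, ih (fun i hi => hadj i (by omega)), hadj m (by omega)⟩

lemma exists_chain_of_mem_nbhd {V : Type*} (G : SimpleGraph V) (m : ℕ) (v : V) :
    ∀ y ∈ nbhd G m v, ∃ f : ℕ → V, f 0 = v ∧ f m = y ∧ ∀ i < m, G.Adj (f i) (f (i+1)) := by
  induction m with
  | zero => intro y hy; exact ⟨fun _ => v, rfl, hy.symm, by omega⟩
  | succ m ih =>
    rintro y ⟨w, hw, hadj⟩
    obtain ⟨f, h0, hm, hf⟩ := ih w hw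
    refine ⟨fun i => if i = m + 1 then y else f i, by simp [h0], by simp, ?_⟩
    intro i hi
    rcases Nat.lt_or_ge i m with hlt | hge
    · simpa [Nat.ne_of_lt (by omega : i < m+1), Nat.ne_of_lt (by omega : i+1 < m+1), Nat.ne_of_lt hlt] using hf i hlt
    · have him : i = m := by omega
      subst him
      simpa [hm] using hadj

lemma not_self_mem (n k r : ℕ) (hk : 0 < k) (h : 2 * k < n) (hr : k - 1 = (n - 2 * k) * r)
    (A : {A : Finset (Fin n) // A.card = k}) : A ∉ nbhd (kneser n k) (2 * r + 1) A := by
  intro hA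
  obtain ⟨f, h0, hm, hf⟩ := exists_chain_of_mem_nbhd (kneser n k) (2*r+1) A A hA
  set a : ℕ → ℕ := fun j => (A.1 ∩ (f j).1).card with ha
  have hdisj : ∀ j < 2*r+1, Disjoint (f j).1 (f (j+1)).1 := fun j hj => (hf j hj).2
  have hI : ∀ j < 2*r+1, a j + a (j+1) ≤ k := by
    intro j hj
    have hd : Disjoint (A.1 ∩ (f j).1) (A.1 ∩ (f (j+1)).1) :=
      ((hdisj j hj).mono Finset.inter_subset_right Finset.inter_subset_right)
    calc a j + a (j+1) = ((A.1 ∩ (f j).1) ∪ (A.1 ∩ (f (j+1)).1)).card :=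
          (Finset.card_union_of_disjoint hd).symm
      _ ≤ A.1.card := Finset.card_le_card
          (Finset.union_subset Finset.inter_subset_left Finset.inter_subset_left)
      _ = k := A.2
  have hII : ∀ j < 2*r+1, k ≤ a j + a (j+1) + (n - 2*k) := by
    intro j hj
    have hsub : A.1 ⊆ (A.1 ∩ (f j).1) ∪ (A.1 ∩ (f (j+1)).1) ∪
        (Finset.univ \ ((f j).1 ∪ (f (j+1)).1)) := by
      intro x hx
      simp only [Finset.mem_union, Finset.mem_inter, Finset.mem_sdiff, Finset.mem_univ,
        true_and]
      by_cases h1 : x ∈ (f j).1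
      · exact Or.inl (Or.inl ⟨hx, h1⟩)
      · by_cases h2 : x ∈ (f (j+1)).1
        · exact Or.inl (Or.inr ⟨hx, h2⟩)
        · exact Or.inr (by simp [h1, h2])
    have hcu : ((f j).1 ∪ (f (j+1)).1).card = 2*k := by
      rw [Finset.card_union_of_disjoint (hdisj j hj), (f j).2, (f (j+1)).2]; ring
    have hcs : (Finset.univ \ ((f j).1 ∪ (f (j+1)).1)).card = n - 2*k := by
      rw [Finset.card_sdiff_of_subset (Finset.subset_univ _), hcu, Finset.card_univ, Fintype.card_fin]
    calc k = A.1.card := A.2.symm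
      _ ≤ _ := Finset.card_le_card hsub
      _ ≤ a j + a (j+1) + (n - 2*k) := by
          refine le_trans (Finset.card_union_le _ _) ?_
          rw [hcs]
          exact Nat.add_le_add_right (Finset.card_union_le _ _) _
  have key : ∀ i, i ≤ r → k ≤ a (2*i) + i * (n - 2*k) := by
    intro i
    induction i with
    | zero => intro _; simp only [Nat.mul_zero, Nat.zero_mul, Nat.add_zero]
              have : a 0 = k := by simp [ha, h0, A.2]
              omega
    | succ i ih =>
      intro hi
      have h1 := ih (by omega)
      have h2 := hI (2*i) (by omega)
      have h3 := hII (2*i+1) (by omega)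
      have e : 2*(i+1) = 2*i+1+1 := by ring
      rw [e]
      have : a (2*i) ≤ a (2*i+1+1) + (n - 2*k) := by omega
      calc k ≤ a (2*i) + i * (n-2*k) := h1
        _ ≤ a (2*i+1+1) + (n-2*k) + i * (n-2*k) := by omega
        _ = a (2*i+1+1) + (i+1) * (n-2*k) := by ring
  have hlast : a (2*r+1) = k := by simp [ha, hm, A.2]
  have h1 := hI (2*r) (by omega)
  have h2 := key r le_rfl
  have hp : r * (n - 2*k) = k - 1 := by rw [mul_comm]; exact hr.symm
  omega

lemma kneser_adj_of_disjoint {n k : ℕ} (hk : 0 < k) (X Y : {A : Finset (Fin n) // A.card = k})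
    (hd : Disjoint X.1 Y.1) : (kneser n k).Adj X Y := by
  refine ⟨fun he => ?_, hd⟩
  subst he
  rw [disjoint_self] at hd
  have hX2 := X.2
  rw [hd] at hX2
  simp only [Finset.bot_eq_empty, Finset.card_empty] at hX2
  omega

lemma mem_of_ne (n k r : ℕ) (hk : 0 < k) (h : 2 * k < n) (hr : k - 1 = (n - 2 * k) * r)
    (A B : {A : Finset (Fin n) // A.card = k}) (hne : B ≠ A) :
    B ∈ nbhd (kneser n k) (2 * r + 1) A := by
  set d := n - 2*k with hd
  have hd1 : 0 < d := by omega
  have hn0 : 0 < n := by omega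
  set S := A.1 ∩ B.1 with hS
  set s := S.card with hs
  -- s ≤ k - 1
  have hsk : s < k := by
    rcases lt_or_ge s k with h1 | h1
    · exact h1
    · exfalso
      have h2 : S.card = k := le_antisymm (A.2 ▸ Finset.card_le_card Finset.inter_subset_left)
        (by omega)
      have h3 : A.1 ⊆ B.1 := by
        have : S = A.1 := Finset.eq_of_subset_of_card_le Finset.inter_subset_left
          (by rw [h2, A.2])
        rw [← this]; exact Finset.inter_subset_right
      have : A.1 = B.1 := Finset.eq_of_subset_of_card_le h3 (by rw [A.2, B.2])
      exact hne (Subtype.ext this.symm)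
  have hsdr : s ≤ d * r := by omega
  -- the fresh element pool
  set U := (Finset.univ : Finset (Fin n)) \ (A.1 ∪ B.1) with hUdef
  have hUcard : s ≤ U.card := by
    have h1 : (A.1 ∪ B.1).card + S.card = A.1.card + B.1.card :=
      Finset.card_union_add_card_inter _ _
    have h2 : U.card = n - (A.1 ∪ B.1).card := by
      rw [hUdef, Finset.card_sdiff_of_subset (Finset.subset_univ _), Finset.card_univ, Fintype.card_fin]
    have h3 : (A.1 ∪ B.1).card ≤ n := le_trans (Finset.card_le_card (Finset.subset_univ _))
      (by rw [Finset.card_univ, Fintype.card_fin])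
    rw [A.2, B.2] at h1
    omega
  obtain ⟨T, hTU, hTc⟩ := Finset.exists_subset_card_eq hUcard
  -- enumerations
  set x : Fin s ↪o Fin n := S.orderEmbOfFin hs.symm with hx
  set y : Fin s ↪o Fin n := T.orderEmbOfFin hTc with hy
  set gx : ℕ → Fin n := fun j => if hj : j < s then x ⟨j, hj⟩ else ⟨0, hn0⟩ with hgx
  set gy : ℕ → Fin n := fun j => if hj : j < s then y ⟨j, hj⟩ else ⟨0, hn0⟩ with hgy
  set X : ℕ → Finset (Fin n) := fun m => (Finset.range m).image gx with hX
  set Y : ℕ → Finset (Fin n) := fun m => (Finset.range m).image gy with hY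
  have hgx_mem : ∀ j < s, gx j ∈ S := by
    intro j hj; simp only [hgx, dif_pos hj]; exact Finset.orderEmbOfFin_mem _ _ _
  have hgy_mem : ∀ j < s, gy j ∈ T := by
    intro j hj; simp only [hgy, dif_pos hj]; exact Finset.orderEmbOfFin_mem _ _ _
  have hX_sub : ∀ m, m ≤ s → X m ⊆ S := by
    intro m hm z hz
    simp only [hX, Finset.mem_image, Finset.mem_range] at hz
    obtain ⟨j, hj, rfl⟩ := hz
    exact hgx_mem j (by omega)
  have hY_sub : ∀ m, m ≤ s → Y m ⊆ T := by
    intro m hm z hz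
    simp only [hY, Finset.mem_image, Finset.mem_range] at hz
    obtain ⟨j, hj, rfl⟩ := hz
    exact hgy_mem j (by omega)
  have hX_card : ∀ m, m ≤ s → (X m).card = m := by
    intro m hm
    rw [hX]
    rw [Finset.card_image_of_injOn, Finset.card_range]
    intro j1 h1 j2 h2 he
    simp only [Finset.coe_range, Set.mem_Iio] at h1 h2
    simp only [hgx, dif_pos (by omega : j1 < s), dif_pos (by omega : j2 < s)] at he
    have := x.injective he
    simpa using congrArg Fin.val this
  have hY_card : ∀ m, m ≤ s → (Y m).card = m := by
    intro m hm
    rw [hY]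
    rw [Finset.card_image_of_injOn, Finset.card_range]
    intro j1 h1 j2 h2 he
    simp only [Finset.coe_range, Set.mem_Iio] at h1 h2
    simp only [hgy, dif_pos (by omega : j1 < s), dif_pos (by omega : j2 < s)] at he
    have := y.injective he
    simpa using congrArg Fin.val this
  have hX_mono : ∀ m m', m ≤ m' → X m ⊆ X m' :=
    fun m m' hm => Finset.image_subset_image (Finset.range_subset_range.2 hm)
  have hY_mono : ∀ m m', m ≤ m' → Y m ⊆ Y m' :=
    fun m m' hm => Finset.image_subset_image (Finset.range_subset_range.2 hm)
  have hXs : X s = S := Finset.eq_of_subset_of_card_le (hX_sub s le_rfl)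
    (by rw [hX_card s le_rfl])
  have hYs : Y s = T := Finset.eq_of_subset_of_card_le (hY_sub s le_rfl)
    (by rw [hY_card s le_rfl]; omega)
  -- the even-position sets
  set E : ℕ → Finset (Fin n) := fun i => (A.1 \ X (min (i*d) s)) ∪ Y (min (i*d) s) with hE
  have hSA : S ⊆ A.1 := Finset.inter_subset_left
  have hYdisjA : ∀ m, m ≤ s → Disjoint (Y m) A.1 := by
    intro m hm
    refine Finset.disjoint_left.2 fun z hz hzA => ?_
    have := hTU (hY_sub m hm hz)
    rw [hUdef] at this
    simp only [Finset.mem_sdiff, Finset.mem_union] at this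
    exact this.2 (Or.inl hzA)
  have hE_card : ∀ i, (E i).card = k := by
    intro i
    set m := min (i*d) s with hm
    have hms : m ≤ s := min_le_right _ _
    have h1 : (A.1 \ X m).card = k - m := by
      rw [Finset.card_sdiff_of_subset (le_trans (hX_sub m hms) hSA : X m ⊆ A.1), A.2, hX_card m hms]
    have h2 : Disjoint (A.1 \ X m) (Y m) :=
      Disjoint.mono_left Finset.sdiff_subset (hYdisjA m hms).symm
    simp only [hE]
    rw [← hm, Finset.card_union_of_disjoint h2, h1, hY_card m hms]
    omega
  have hE0 : E 0 = A.1 := by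
    simp [hE, hX, hY]
  have hEr : Disjoint (E r) B.1 := by
    have hm : min (r*d) s = s :=
      min_eq_right (by rw [mul_comm]; exact hsdr)
    simp only [hE]
    simp only [hm, hXs, hYs, hS]
    rw [Finset.sdiff_inter_self_left]
    refine Finset.disjoint_union_left.2 ⟨Finset.sdiff_disjoint, ?_⟩
    refine Finset.disjoint_left.2 fun z hz hzB => ?_
    have := hTU hz
    rw [hUdef] at this
    simp only [Finset.mem_sdiff, Finset.mem_union] at this
    exact this.2 (Or.inr hzB)
  have hEE : ∀ i, ((E i) ∪ (E (i+1))).card ≤ k + d := by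
    intro i
    set m := min (i*d) s with hm
    set m' := min ((i+1)*d) s with hm'
    have hmm : m ≤ m' := by
      have : i*d ≤ (i+1)*d := Nat.mul_le_mul_right _ (by omega)
      omega
    have hdm : m' - m ≤ d := by
      have : (i+1)*d = i*d + d := by ring
      omega
    have hms : m ≤ s := min_le_right _ _
    have hm's : m' ≤ s := min_le_right _ _
    have hsub : (E i) ∪ (E (i+1)) ⊆ (E (i+1)) ∪ (X m' \ X m) := by
      intro z hz
      rcases Finset.mem_union.1 hz with hz | hz
      · simp only [hE, ← hm, ← hm'] at hz
        simp only [Finset.mem_union, Finset.mem_sdiff] at hz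
        rcases hz with ⟨hzA, hzX⟩ | hzY
        · by_cases hzX' : z ∈ X m'
          · exact Finset.mem_union_right _ (Finset.mem_sdiff.2 ⟨hzX', hzX⟩)
          · refine Finset.mem_union_left _ ?_
            simp only [hE, ← hm']
            exact Finset.mem_union_left _ (Finset.mem_sdiff.2 ⟨hzA, hzX'⟩)
        · refine Finset.mem_union_left _ ?_
          simp only [hE, ← hm']
          exact Finset.mem_union_right _ (hY_mono m m' hmm hzY)
      · exact Finset.mem_union_left _ hz
    calc ((E i) ∪ (E (i+1))).card ≤ ((E (i+1)) ∪ (X m' \ X m)).card :=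
          Finset.card_le_card hsub
      _ ≤ (E (i+1)).card + (X m' \ X m).card := Finset.card_union_le _ _
      _ ≤ k + d := by
          rw [hE_card (i+1), Finset.card_sdiff_of_subset (hX_mono m m' hmm), hX_card m hms,
            hX_card m' hm's]
          omega
  have hO : ∀ i, ∃ O : Finset (Fin n), O.card = k ∧ Disjoint O (E i ∪ E (i+1)) := by
    intro i
    have h1 : k ≤ ((Finset.univ : Finset (Fin n)) \ (E i ∪ E (i+1))).card := by
      rw [Finset.card_sdiff_of_subset (Finset.subset_univ _), Finset.card_univ, Fintype.card_fin]
      have := hEE i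
      omega
    obtain ⟨O, hO1, hO2⟩ := Finset.exists_subset_card_eq h1
    refine ⟨O, hO2, ?_⟩
    refine Finset.disjoint_left.2 fun z hz hz2 => ?_
    have := hO1 hz
    simp only [Finset.mem_sdiff] at this
    exact this.2 hz2
  set O : ℕ → Finset (Fin n) := fun i => (hO i).choose with hOdef
  have hO_card : ∀ i, (O i).card = k := fun i => (hO i).choose_spec.1
  have hO_disj : ∀ i, Disjoint (O i) (E i ∪ E (i+1)) := fun i => (hO i).choose_spec.2
  -- assemble the walk
  set f : ℕ → {A : Finset (Fin n) // A.card = k} := fun j =>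
    if j = 2*r+1 then B else if Even j then ⟨E (j/2), hE_card _⟩ else ⟨O (j/2), hO_card _⟩
    with hfdef
  have hf0 : f 0 = A := by
    simp only [hfdef]
    simp only [if_neg (by omega : ¬ (0 = 2*r+1)), if_pos (Even.zero)]
    exact Subtype.ext (by simpa using hE0)
  have hfm : f (2*r+1) = B := by simp only [hfdef]; simp
  have hadj : ∀ i < 2*r+1, (kneser n k).Adj (f i) (f (i+1)) := by
    intro i hi
    rcases Nat.even_or_odd i with hev | hodd
    · obtain ⟨j, hj⟩ := id hev
      have hjr : j ≤ r := by omega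
      have hfi : f i = ⟨E j, hE_card j⟩ := by
        simp only [hfdef]
        simp only [if_neg (by omega : ¬ (i = 2*r+1)), if_pos hev]
        exact Subtype.ext (congrArg E (by omega : i / 2 = j))
      by_cases hjr' : j = r
      · have hi1 : i + 1 = 2*r+1 := by omega
        have : f (i+1) = B := by simp only [hfdef, if_pos hi1]
        rw [hfi, this]
        exact kneser_adj_of_disjoint hk _ _ (by simpa [hjr'] using hEr)
      · have hfi1 : f (i+1) = ⟨O j, hO_card j⟩ := by
          simp only [hfdef]
          have hne1 : ¬ (i+1 = 2*r+1) := by omega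
          have hne2 : ¬ Even (i+1) := fun hc => (Nat.even_add_one.mp hc) hev
          simp only [if_neg hne1, if_neg hne2]
          exact Subtype.ext (congrArg O (by omega : (i+1) / 2 = j))
        rw [hfi, hfi1]
        refine kneser_adj_of_disjoint hk _ _ ?_
        exact ((hO_disj j).mono_right (Finset.subset_union_left)).symm
    · obtain ⟨j, hj⟩ := id hodd
      have hjr : j < r := by omega
      have hfi : f i = ⟨O j, hO_card j⟩ := by
        simp only [hfdef]
        have hne1 : ¬ (i = 2*r+1) := by omega
        have hne2 : ¬ Even i := by
          rw [← Nat.not_odd_iff_even]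
          exact not_not.2 hodd
        simp only [if_neg hne1, if_neg hne2]
        exact Subtype.ext (congrArg O (by omega : i / 2 = j))
      have hfi1 : f (i+1) = ⟨E (j+1), hE_card (j+1)⟩ := by
        simp only [hfdef]
        have hne1 : ¬ (i+1 = 2*r+1) := by omega
        have hev : Even (i+1) := by
          rw [hj]
          exact ⟨j+1, by ring⟩
        simp only [if_neg hne1, if_pos hev]
        exact Subtype.ext (congrArg E (by omega : (i+1) / 2 = j + 1))
      rw [hfi, hfi1]
      refine kneser_adj_of_disjoint hk _ _ ?_
      exact (hO_disj j).mono_right (Finset.subset_union_right)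
  have := mem_nbhd_of_chain (kneser n k) (2*r+1) f hadj
  rw [hf0, hfm] at this
  exact this

/-- If `n > 2k` and `k - 1 = (n-2k)r` then `N_{2r+1}(A) = V(K_{n,k}) \ {A}` for every vertex `A`. -/
theorem stmt_2 (n k r : ℕ) (hk : 0 < k) (h : 2 * k < n) (hr : k - 1 = (n - 2 * k) * r)
    (A : {A : Finset (Fin n) // A.card = k}) :
    nbhd (kneser n k) (2 * r + 1) A = {B | B ≠ A} := by
  ext B
  simp only [Set.mem_setOf_eq]
  constructor
  · intro hB hBA
    exact not_self_mem n k r hk h hr A (hBA ▸ hB)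
  · exact mem_of_ne n k r hk h hr A B
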